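/- Let α > 0, q = α/(1+α), and p ∈ (q, 1). Suppose (b_{n,m}) are nonnegative reals with b_{n,m} = 0 whenever m > αn, and suppose f : ℕ → ℝ≥0 satisfies Σ_{m ≤ αn} b_{n,m} q^m (1-q)^n ≤ f(n) for all n. Then Σ_{m ≤ αn} b_{n,m} p^m (1-p)^n ≤ ((1+α)^{1+α}/α^α · p^α (1-p))^n · f(n) for every n. -/

import Mathlib

open Finset in
/-- Core estimate of the Peierls argument: if `b n m = 0` for `m > α n` and the weighted
sums at `q = α/(1+α)` are bounded by `f n`, then the weighted sums at `p > q` gain at most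
a factor `((1+α)^(1+α)/α^α · p^α (1-p))^n`. -/
theorem peierls_estimate (α : ℝ) (hα : 0 < α) (p : ℝ)
    (hq : α / (1 + α) < p) (hp : p < 1)
    (b : ℕ → ℕ → ℝ) (hb : ∀ n m, 0 ≤ b n m)
    (hb0 : ∀ n m : ℕ, α * n < m → b n m = 0)
    (f : ℕ → ℝ) (hf : ∀ n, 0 ≤ f n)
    (hsum : ∀ n : ℕ,
      ∑ m ∈ Finset.range (Nat.floor (α * n) + 1),
        b n m * (α / (1 + α)) ^ m * (1 - α / (1 + α)) ^ n ≤ f n) :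
    ∀ n : ℕ,
      ∑ m ∈ Finset.range (Nat.floor (α * n) + 1), b n m * p ^ m * (1 - p) ^ n ≤
        ((1 + α) ^ (1 + α) / α ^ α * (p ^ α * (1 - p))) ^ n * f n := by
  intro n
  have h1α : (0:ℝ) < 1 + α := by linarith
  set q : ℝ := α / (1 + α) with hqdef
  have hq0 : 0 < q := div_pos hα h1α
  have hq1 : q < 1 := by rw [hqdef, div_lt_one h1α]; linarith
  have hp0 : 0 < p := hq0.trans hq
  have h1p : (0:ℝ) < 1 - p := by linarith
  have h1q0 : (0:ℝ) < 1 - q := by linarith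
  have h1q : (1:ℝ) - q = 1 / (1 + α) := by
    rw [hqdef]; field_simp; ring
  -- identify the factor
  have hγeq : (1 + α) ^ (1 + α) / α ^ α * (p ^ α * (1 - p))
      = (p / q) ^ α * ((1 - p) / (1 - q)) := by
    rw [Real.div_rpow hp0.le hq0.le, hqdef, Real.div_rpow hα.le h1α.le,
      Real.rpow_add h1α, Real.rpow_one]
    have hαα : (0:ℝ) < α ^ α := Real.rpow_pos_of_pos hα α
    have h1αα : (0:ℝ) < (1 + α) ^ α := Real.rpow_pos_of_pos h1α α
    rw [show (1:ℝ) - α / (1 + α) = 1 / (1 + α) by field_simp; ring]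
    field_simp
  rw [hγeq]
  have hγ0 : 0 ≤ (p / q) ^ α * ((1 - p) / (1 - q)) := by positivity
  calc ∑ m ∈ Finset.range (Nat.floor (α * n) + 1), b n m * p ^ m * (1 - p) ^ n
      ≤ ∑ m ∈ Finset.range (Nat.floor (α * n) + 1),
          ((p / q) ^ α * ((1 - p) / (1 - q))) ^ n * (b n m * q ^ m * (1 - q) ^ n) := by
        apply Finset.sum_le_sum
        intro m hm
        have hm' : (m : ℝ) ≤ α * n := by
          have h1 : m ≤ Nat.floor (α * n) := Nat.lt_succ_iff.mp (Finset.mem_range.mp hm)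
          calc (m : ℝ) ≤ (Nat.floor (α * n) : ℝ) := by exact_mod_cast h1
            _ ≤ α * n := Nat.floor_le (by positivity)
        have hpq : (1:ℝ) ≤ p / q := (one_le_div hq0).mpr hq.le
        have h1 : (p / q) ^ m ≤ ((p / q) ^ α) ^ n := by
          rw [← Real.rpow_natCast (p / q) m, ← Real.rpow_natCast ((p / q) ^ α) n,
            ← Real.rpow_mul (by positivity)]
          exact Real.rpow_le_rpow_of_exponent_le hpq hm'
        have hpm : p ^ m = (p / q) ^ m * q ^ m := by
          rw [div_pow, div_mul_cancel₀]
          exact pow_ne_zero _ hq0.ne'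
        have hpn : (1 - p) ^ n = ((1 - p) / (1 - q)) ^ n * (1 - q) ^ n := by
          rw [div_pow, div_mul_cancel₀]
          exact pow_ne_zero _ h1q0.ne'
        have hmul := mul_le_mul_of_nonneg_right h1
          (show 0 ≤ b n m * q ^ m * (((1 - p) / (1 - q)) ^ n * (1 - q) ^ n) from
            mul_nonneg (mul_nonneg (hb n m) (pow_nonneg hq0.le m)) (by positivity))
        calc b n m * p ^ m * (1 - p) ^ n
            = (p / q) ^ m * (b n m * q ^ m * (((1 - p) / (1 - q)) ^ n * (1 - q) ^ n)) := by
              rw [hpm, hpn]; ring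
          _ ≤ ((p / q) ^ α) ^ n * (b n m * q ^ m * (((1 - p) / (1 - q)) ^ n * (1 - q) ^ n)) :=
              hmul
          _ = ((p / q) ^ α * ((1 - p) / (1 - q))) ^ n * (b n m * q ^ m * (1 - q) ^ n) := by
              rw [mul_pow]; ring
    _ = ((p / q) ^ α * ((1 - p) / (1 - q))) ^ n *
          ∑ m ∈ Finset.range (Nat.floor (α * n) + 1), b n m * q ^ m * (1 - q) ^ n := by
        rw [← Finset.mul_sum]
    _ ≤ ((p / q) ^ α * ((1 - p) / (1 - q))) ^ n * f n :=
        mul_le_mul_of_nonneg_left (hsum n) (pow_nonneg hγ0 n)
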